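/- For the exactly linear drift F(x) = f + A(x − x₀) with A symmetric, the drift difference evaluated at the two embedded solutions satisfies F(x^Heun) − F(x^Euler) = A(x^Heun − x^Euler) = (h²/2) A² f; hence if f has a nonzero component along a simple dominant eigenvector v_1 of A, then as the spectral gap |λ_1|/max_{k≥2}|λ_k| → ∞ the normalized drift difference converges to ±v_1. -/

import Mathlib

open scoped RealInnerProductSpace

set_option maxHeartbeats 1000000

/-- For the exactly linear drift F(x) = f + A(x − x₀) with A symmetric, the drift
difference at the two embedded solutions satisfies
F(x^Heun) − F(x^Euler) = A(x^Heun − x^Euler) = (h²/2) A² f; hence if f has a nonzero component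
along a simple dominant eigenvector v_{i0} of A, then as the spectral gap
|λ_{i0}|/max_{k≠i0}|λ_k| → ∞, the normalized drift difference converges to ±v_{i0}. -/
theorem stmt_14 (n : ℕ) (b : OrthonormalBasis (Fin n) ℝ (EuclideanSpace ℝ (Fin n)))
    (i0 : Fin n) (f x₀ : EuclideanSpace ℝ (Fin n)) (h : ℝ) (hh : 0 < h)
    (hf : ⟪f, b i0⟫ ≠ 0) :
    (∀ (A : EuclideanSpace ℝ (Fin n) →ₗ[ℝ] EuclideanSpace ℝ (Fin n)) (lam : Fin n → ℝ),
      (∀ k, A (b k) = lam k • b k) →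
      let F := fun y : EuclideanSpace ℝ (Fin n) => f + A (y - x₀)
      let xE := x₀ - h • F x₀
      let xH := x₀ - (h / 2) • (F x₀ + F xE)
      F xH - F xE = A (xH - xE) ∧ A (xH - xE) = (h ^ 2 / 2) • A (A f)) ∧
    ∀ ε : ℝ, 0 < ε → ∃ G : ℝ,
      ∀ (A : EuclideanSpace ℝ (Fin n) →ₗ[ℝ] EuclideanSpace ℝ (Fin n)) (lam : Fin n → ℝ),
        (∀ k, A (b k) = lam k • b k) → lam i0 ≠ 0 →
        (∀ k, k ≠ i0 → G * |lam k| < |lam i0|) →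
        let d := (h ^ 2 / 2) • A (A f)
        d ≠ 0 ∧ (‖(‖d‖⁻¹ • d) - b i0‖ < ε ∨ ‖(‖d‖⁻¹ • d) + b i0‖ < ε) := by
  constructor
  · intro A lam _ F xE xH
    have hF : F = fun y => f + A (y - x₀) := rfl
    have hE : xE = x₀ - h • F x₀ := rfl
    have hH : xH = x₀ - (h / 2) • (F x₀ + F xE) := rfl
    have hFx0 : F x₀ = f := by simp [hF]
    have hkey : xH - xE = (h ^ 2 / 2) • A f := by
      rw [hH, hE, hFx0, hF]
      simp only [sub_sub_cancel_left, map_neg, map_smul]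
      module
    constructor
    · rw [hF]
      simp only [add_sub_add_left_eq_sub, ← map_sub, sub_sub_sub_cancel_right]
    · rw [hkey, map_smul]
  · intro ε hε
    set M : ℝ := ‖f‖ ^ 2 / ⟪f, b i0⟫ ^ 2 with hM
    have hM0 : 0 ≤ M := by positivity
    refine ⟨max 1 (2 * M / ε ^ 2 + 1), ?_⟩
    intro A lam hA hlam hgap d
    have hd : d = (h ^ 2 / 2) • A (A f) := rfl
    set G : ℝ := max 1 (2 * M / ε ^ 2 + 1) with hG
    have hG1 : (1 : ℝ) ≤ G := le_max_left _ _
    have hG0 : (0 : ℝ) < G := lt_of_lt_of_le one_pos hG1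
    -- eigen action on inner products
    have hAk : ∀ (y : EuclideanSpace ℝ (Fin n)) (k : Fin n), ⟪b k, A y⟫ = lam k * ⟪b k, y⟫ := by
      intro y k
      conv_lhs => rw [← b.sum_repr' y]
      rw [map_sum, inner_sum]
      simp only [map_smul, hA, smul_smul, real_inner_smul_right,
        orthonormal_iff_ite.mp b.orthonormal, mul_ite, mul_one, mul_zero]
      rw [Finset.sum_ite_eq]
      simp [mul_comm]
    have hcoef : ∀ k, ⟪b k, d⟫ = (h ^ 2 / 2) * (lam k ^ 2 * ⟪b k, f⟫) := by
      intro k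
      rw [hd, real_inner_smul_right, hAk, hAk]
      ring
    -- norm squared as sum of squared coefficients
    have hnormsq : ∀ w : EuclideanSpace ℝ (Fin n), ‖w‖ ^ 2 = ∑ k, ⟪b k, w⟫ ^ 2 := by
      intro w
      rw [← real_inner_self_eq_norm_sq, ← b.sum_inner_mul_inner w w]
      exact Finset.sum_congr rfl fun k _ => by rw [real_inner_comm w (b k)]; ring
    have hfc : ⟪b i0, f⟫ = ⟪f, b i0⟫ := real_inner_comm _ _
    set c : ℝ := ⟪b i0, d⟫ with hc
    have hcval : c = (h ^ 2 / 2) * (lam i0 ^ 2 * ⟪f, b i0⟫) := by rw [hc, hcoef, hfc]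
    have hcne : c ≠ 0 := by
      rw [hcval]
      have h2 : h ^ 2 / 2 ≠ 0 := by positivity
      exact mul_ne_zero h2 (mul_ne_zero (pow_ne_zero 2 hlam) hf)
    have hdne : d ≠ 0 := by
      intro h0
      exact hcne (by rw [hc, h0, inner_zero_right])
    refine ⟨hdne, ?_⟩
    -- bound the residual
    set R : ℝ := ∑ k ∈ Finset.univ.erase i0, ⟪b k, d⟫ ^ 2 with hR
    have hR0 : 0 ≤ R := Finset.sum_nonneg fun _ _ => sq_nonneg _
    have hsplit : ‖d‖ ^ 2 = c ^ 2 + R := by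
      rw [hnormsq d, ← Finset.add_sum_erase Finset.univ _ (Finset.mem_univ i0)]
    have hfle : ∑ k ∈ Finset.univ.erase i0, ⟪b k, f⟫ ^ 2 ≤ ‖f‖ ^ 2 := by
      rw [hnormsq f]
      exact Finset.sum_le_sum_of_subset_of_nonneg (Finset.erase_subset _ _)
        (fun _ _ _ => sq_nonneg _)
    have hlamk : ∀ k, k ≠ i0 → lam k ^ 2 ≤ lam i0 ^ 2 / G ^ 2 := by
      intro k hk
      have h1 : G * |lam k| < |lam i0| := hgap k hk
      have h2 : |lam k| ≤ |lam i0| / G := by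
        rw [le_div_iff₀ hG0]
        nlinarith [abs_nonneg (lam k)]
      calc lam k ^ 2 = |lam k| ^ 2 := (sq_abs _).symm
        _ ≤ (|lam i0| / G) ^ 2 := pow_le_pow_left₀ (abs_nonneg _) h2 2
        _ = lam i0 ^ 2 / G ^ 2 := by rw [div_pow, sq_abs]
    have hRle : R ≤ c ^ 2 * (M / G ^ 4) := by
      have hbound : ∀ k ∈ Finset.univ.erase i0,
          ⟪b k, d⟫ ^ 2 ≤ (h ^ 2 / 2) ^ 2 * (lam i0 ^ 2 / G ^ 2) ^ 2 * ⟪b k, f⟫ ^ 2 := by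
        intro k hk
        have hk' : k ≠ i0 := Finset.ne_of_mem_erase hk
        rw [hcoef k, mul_pow, mul_pow]
        have h4 : (lam k ^ 2) ^ 2 ≤ (lam i0 ^ 2 / G ^ 2) ^ 2 :=
          pow_le_pow_left₀ (sq_nonneg _) (hlamk k hk') 2
        have h5 : (lam k ^ 2) ^ 2 * ⟪b k, f⟫ ^ 2 ≤ (lam i0 ^ 2 / G ^ 2) ^ 2 * ⟪b k, f⟫ ^ 2 :=
          mul_le_mul_of_nonneg_right h4 (sq_nonneg _)
        have h6 := mul_le_mul_of_nonneg_left h5 (sq_nonneg (h ^ 2 / 2))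
        exact h6.trans (le_of_eq (by ring))
      calc R ≤ ∑ k ∈ Finset.univ.erase i0,
            (h ^ 2 / 2) ^ 2 * (lam i0 ^ 2 / G ^ 2) ^ 2 * ⟪b k, f⟫ ^ 2 :=
          Finset.sum_le_sum hbound
        _ = (h ^ 2 / 2) ^ 2 * (lam i0 ^ 2 / G ^ 2) ^ 2 *
            ∑ k ∈ Finset.univ.erase i0, ⟪b k, f⟫ ^ 2 := by rw [← Finset.mul_sum]
        _ ≤ (h ^ 2 / 2) ^ 2 * (lam i0 ^ 2 / G ^ 2) ^ 2 * ‖f‖ ^ 2 :=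
            mul_le_mul_of_nonneg_left hfle (by positivity)
        _ = c ^ 2 * (M / G ^ 4) := by
            rw [hcval, hM]
            have hf2 : ⟪f, b i0⟫ ^ 2 ≠ 0 := pow_ne_zero 2 hf
            have hG0' : G ≠ 0 := ne_of_gt hG0
            generalize ⟪f, b i0⟫ = p at hf2 ⊢
            field_simp
            rw [mul_div_cancel_right₀ _ (fun h0 => hf2 (by rw [h0]; ring))]
    have hgap4 : 2 * (M / G ^ 4) < ε ^ 2 := by
      have hG4 : G ≤ G ^ 4 := le_self_pow₀ hG1 (by norm_num)
      have h1 : M / G ^ 4 ≤ M / G := div_le_div_of_nonneg_left hM0 hG0 hG4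
      have h2 : 2 * M / ε ^ 2 + 1 ≤ G := le_max_right _ _
      have hε2 : (0 : ℝ) < ε ^ 2 := by positivity
      have h3 : 2 * M < ε ^ 2 * G := by
        have he : ε ^ 2 * (2 * M / ε ^ 2 + 1) = 2 * M + ε ^ 2 := by field_simp
        nlinarith [mul_le_mul_of_nonneg_left h2 hε2.le]
      have h4 : 2 * (M / G) < ε ^ 2 := by
        rw [mul_div_assoc', div_lt_iff₀ hG0]
        linarith
      linarith
    have h2R : 2 * R < ε ^ 2 * c ^ 2 := by
      have hc2 : 0 < c ^ 2 := by positivity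
      nlinarith [hRle, hgap4]
    -- final geometric step
    have hdpos : 0 < ‖d‖ := norm_pos_iff.mpr hdne
    have hdgec : |c| ≤ ‖d‖ := by
      nlinarith [hsplit, hR0, abs_nonneg c, sq_abs c, norm_nonneg d]
    have hu1 : ‖(‖d‖⁻¹ • d)‖ = 1 := norm_smul_inv_norm hdne
    have huin : ⟪(‖d‖⁻¹ • d), b i0⟫ = c / ‖d‖ := by
      rw [real_inner_smul_left, real_inner_comm, ← hc, div_eq_inv_mul]
    have hbn : ‖b i0‖ = 1 := b.orthonormal.1 i0
    have hsplit2 : ε ^ 2 * ‖d‖ ^ 2 = ε ^ 2 * c ^ 2 + ε ^ 2 * R := by rw [hsplit]; ring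
    rcases lt_or_gt_of_ne hcne with hneg | hpos
    · right
      have habs : -c ≤ ‖d‖ := (neg_le_abs c).trans hdgec
      have hsq : ‖(‖d‖⁻¹ • d) + b i0‖ ^ 2 = 2 + 2 * (c / ‖d‖) := by
        rw [norm_add_sq_real, hu1, huin, hbn]; ring
      have h6 : (2 * ‖d‖ + 2 * c) * ‖d‖ < (ε ^ 2 * ‖d‖) * ‖d‖ := by
        have hcd : 2 * c * ‖d‖ ≤ 2 * c ^ 2 := by nlinarith [habs, hneg]
        nlinarith [hsplit, hsplit2, h2R, mul_nonneg (sq_nonneg ε) hR0]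
      have h5 : 2 * ‖d‖ + 2 * c < ε ^ 2 * ‖d‖ := lt_of_mul_lt_mul_right h6 hdpos.le
      have hlt : ‖(‖d‖⁻¹ • d) + b i0‖ ^ 2 < ε ^ 2 := by
        rw [hsq]
        have heq : 2 + 2 * (c / ‖d‖) = (2 * ‖d‖ + 2 * c) / ‖d‖ := by field_simp
        rw [heq, div_lt_iff₀ hdpos]
        linarith
      exact lt_of_pow_lt_pow_left₀ 2 hε.le hlt
    · left
      have habs : c ≤ ‖d‖ := (le_abs_self c).trans hdgec
      have hsq : ‖(‖d‖⁻¹ • d) - b i0‖ ^ 2 = 2 - 2 * (c / ‖d‖) := by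
        rw [norm_sub_sq_real, hu1, huin, hbn]; ring
      have h6 : (2 * ‖d‖ - 2 * c) * ‖d‖ < (ε ^ 2 * ‖d‖) * ‖d‖ := by
        have hcd : 2 * c ^ 2 ≤ 2 * c * ‖d‖ := by nlinarith [habs, hpos]
        nlinarith [hsplit, hsplit2, h2R, mul_nonneg (sq_nonneg ε) hR0]
      have h5 : 2 * ‖d‖ - 2 * c < ε ^ 2 * ‖d‖ := lt_of_mul_lt_mul_right h6 hdpos.le
      have hlt : ‖(‖d‖⁻¹ • d) - b i0‖ ^ 2 < ε ^ 2 := by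
        rw [hsq]
        have heq : 2 - 2 * (c / ‖d‖) = (2 * ‖d‖ - 2 * c) / ‖d‖ := by field_simp
        rw [heq, div_lt_iff₀ hdpos]
        linarith
      exact lt_of_pow_lt_pow_left₀ 2 hε.le hlt
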